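/- Every standard irreducible permutation update chain stays irreducible: if π is an irreducible permutation of {1,…,n} and π' is defined by π'(j) = π(j) if π(j) ≤ π(n), π'(j) = π(j)+1 if π(n) < π(j) < n, π'(j) = π(n)+1 if π(j) = n, then π' is a permutation of {1,…,n} and is irreducible. -/

import Mathlib

open Set

/-- A permutation of `{1,…,n}` is irreducible if it leaves no proper initial
segment `{1,…,k}` invariant. -/
def PermIrreducible (n : ℕ) (σ : ℕ → ℕ) : Prop :=
  ∀ k : ℕ, 1 ≤ k → k < n → ¬ Set.MapsTo σ (Set.Icc 1 k) (Set.Icc 1 k)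

/-- The permutation update of the first case of Rauzy induction. -/
def rauzyA (n : ℕ) (π : ℕ → ℕ) : ℕ → ℕ :=
  fun j => if π j ≤ π n then π j else if π j < n then π j + 1 else π n + 1

/-- The first-case Rauzy update of an irreducible permutation of `{1,…,n}` is
again a permutation of `{1,…,n}` and is irreducible. -/
theorem rauzyA_irreducible
    (n : ℕ) (σ : ℕ → ℕ)
    (hbij : Set.BijOn σ (Set.Icc 1 n) (Set.Icc 1 n))
    (hirr : PermIrreducible n σ) :
    Set.BijOn (rauzyA n σ) (Set.Icc 1 n) (Set.Icc 1 n) ∧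
      PermIrreducible n (rauzyA n σ) := by
  rcases Nat.eq_zero_or_pos n with hn | hn
  · subst hn
    have he : (Set.Icc 1 0 : Set ℕ) = ∅ := Set.Icc_eq_empty (by omega)
    constructor
    · rw [he]; exact Set.bijOn_empty _
    · intro k hk hk'; omega
  -- n ≥ 1
  have hmem : n ∈ Set.Icc 1 n := Set.mem_Icc.mpr ⟨hn, le_refl n⟩
  have hm := Set.mem_Icc.mp (hbij.mapsTo hmem)
  have hσ : ∀ j, j ∈ Set.Icc 1 n → 1 ≤ σ j ∧ σ j ≤ n := by
    intro j hj; exact Set.mem_Icc.mp (hbij.mapsTo hj)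
  have hmaps : Set.MapsTo (rauzyA n σ) (Set.Icc 1 n) (Set.Icc 1 n) := by
    intro j hj
    have hj' := hσ j hj
    simp only [rauzyA, Set.mem_Icc]
    split_ifs <;> omega
  have hinj : Set.InjOn (rauzyA n σ) (Set.Icc 1 n) := by
    intro a ha b hb h
    have ha' := hσ a ha
    have hb' := hσ b hb
    apply hbij.injOn ha hb
    simp only [rauzyA] at h
    split_ifs at h <;> omega
  have hbij' : Set.BijOn (rauzyA n σ) (Set.Icc 1 n) (Set.Icc 1 n) :=
    ((Set.finite_Icc 1 n).injOn_iff_bijOn_of_mapsTo hmaps).mp hinj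
  refine ⟨hbij', ?_⟩
  intro k hk1 hkn hmaps'
  rcases le_or_gt k (σ n) with hkm | hkm
  · -- k ≤ σ n : σ itself leaves [1,k] invariant
    apply hirr k hk1 hkn
    intro j hj
    have hjn : j ∈ Set.Icc 1 n := by
      have := Set.mem_Icc.mp hj; exact Set.mem_Icc.mpr ⟨this.1, by omega⟩
    have hj' := hσ j hjn
    have h' := Set.mem_Icc.mp (hmaps' hj)
    simp only [rauzyA] at h'
    simp only [Set.mem_Icc]
    split_ifs at h' <;> omega
  · -- σ n < k : pigeonhole, σ maps [1,k] ∪ {n} into [1,k-1] ∪ {n}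
    have hsub : (↑(insert n (Finset.Icc 1 k)) : Set ℕ) ⊆ Set.Icc 1 n := by
      intro x hx
      simp only [Finset.coe_insert, Set.mem_insert_iff, Finset.coe_Icc,
        Set.mem_Icc] at hx ⊢
      omega
    have hcard := Finset.card_le_card_of_injOn σ
      (s := insert n (Finset.Icc 1 k)) (t := insert n (Finset.Icc 1 (k - 1)))
      (fun a ha => ?_) (hbij.injOn.mono hsub)
    · have c1 : (insert n (Finset.Icc 1 k)).card = k + 1 := by
        rw [Finset.card_insert_of_notMem (by simp [Finset.mem_Icc]; omega)]
        simp [Nat.card_Icc]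
      have c2 : (insert n (Finset.Icc 1 (k - 1))).card = k := by
        rw [Finset.card_insert_of_notMem (by simp [Finset.mem_Icc]; omega)]
        simp [Nat.card_Icc]; omega
      omega
    · rcases Finset.mem_insert.mp ha with rfl | ha
      · apply Finset.mem_insert.mpr; right
        simp only [Finset.mem_Icc]; omega
      · have ha' := Finset.mem_Icc.mp ha
        have han : a ∈ Set.Icc 1 n := Set.mem_Icc.mpr ⟨ha'.1, by omega⟩
        have hσa := hσ a han
        have h' := Set.mem_Icc.mp (hmaps' (Set.mem_Icc.mpr ha'))
        simp only [rauzyA] at h'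
        simp only [Finset.mem_coe, Finset.mem_insert, Finset.mem_Icc]
        split_ifs at h' <;> omega
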